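/- arXiv:2401.01770 — 3 statements merged into one kernel-verified Lean document; each statement's English description precedes it below -/
import Mathlib

section
/- Let Â be the infinite tridiagonal matrix with zero diagonal and symmetric off-diagonal entries c_k = (k+1)/√((2k+1)(2k+3)) > 0, and B̂ = (√2, 0, 0, …)ᵀ. Then the linear span of {Â^n B̂ : n ∈ ℕ} contains every standard basis vector e_k of ℓ², and hence is dense in ℓ²; consequently, the moment system ṁ = Âm + B̂u is approximately controllable. -/
open MeasureTheory

noncomputable def legendreCoeff (k : ℕ) : ℝ :=
  (k + 1) / Real.sqrt ((2 * k + 1) * (2 * k + 3))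

private theorem aux_part1
    (A : lp (fun _ : ℕ => ℝ) 2 →L[ℝ] lp (fun _ : ℕ => ℝ) 2)
    (hA : ∀ ξ : lp (fun _ : ℕ => ℝ) 2, ∀ k : ℕ,
      (A ξ : ∀ _ : ℕ, ℝ) k =
        (if k = 0 then 0 else legendreCoeff (k - 1) * (ξ : ∀ _ : ℕ, ℝ) (k - 1))
          + legendreCoeff k * (ξ : ∀ _ : ℕ, ℝ) (k + 1))
    (Bv : lp (fun _ : ℕ => ℝ) 2)
    (hBv : ∀ k : ℕ, (Bv : ∀ _ : ℕ, ℝ) k = if k = 0 then Real.sqrt 2 else 0) :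
    (∀ k : ℕ, lp.single 2 k (1 : ℝ) ∈
        Submodule.span ℝ (Set.range fun n : ℕ => (A ^ n) Bv)) := by
  have hc : ∀ k : ℕ, 0 < legendreCoeff k := by
    intro k; unfold legendreCoeff; positivity
  set v : ℕ → lp (fun _ : ℕ => ℝ) 2 := fun n => (A ^ n) Bv with hv
  have hvsucc : ∀ n, v (n + 1) = A (v n) := by
    intro n; show (A ^ (n+1)) Bv = A ((A ^ n) Bv); rw [pow_succ', ContinuousLinearMap.mul_apply]
  -- coordinates
  have hcoord : ∀ n : ℕ,
      (∀ k, n < k → (v n : ∀ _ : ℕ, ℝ) k = 0) ∧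
      (v n : ∀ _ : ℕ, ℝ) n = Real.sqrt 2 * ∏ j ∈ Finset.range n, legendreCoeff j := by
    intro n
    induction n with
    | zero =>
      constructor
      · intro k hk
        have hk0 : k ≠ 0 := by omega
        simp [hv, hBv k, hk0]
      · simp [hv, hBv 0]
    | succ n ih =>
      have hz : ∀ k, n < k → (v n : ∀ _ : ℕ, ℝ) k = 0 := ih.1
      constructor
      · intro k hk
        rw [hvsucc, hA]
        have h1 : (v n : ∀ _ : ℕ, ℝ) (k + 1) = 0 := hz _ (by omega)
        have hk0 : k ≠ 0 := by omega
        have h2 : (v n : ∀ _ : ℕ, ℝ) (k - 1) = 0 := hz _ (by omega)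
        simp [hk0, h1, h2]
      · rw [hvsucc, hA]
        have h1 : (v n : ∀ _ : ℕ, ℝ) (n + 1 + 1) = 0 := hz _ (by omega)
        have h2 : (v n : ∀ _ : ℕ, ℝ) (n + 1 - 1) = (v n : ∀ _ : ℕ, ℝ) n := by
          rw [Nat.add_sub_cancel]
        rw [h1, h2, ih.2]
        simp [Finset.prod_range_succ]
        ring
  -- span membership
  intro k
  induction k using Nat.strong_induction_on with
  | _ k ih =>
    set α : ℝ := Real.sqrt 2 * ∏ j ∈ Finset.range k, legendreCoeff j with hα
    have hαne : α ≠ 0 := by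
      have h2 : (0:ℝ) < Real.sqrt 2 := by positivity
      have hp : (0:ℝ) < ∏ j ∈ Finset.range k, legendreCoeff j :=
        Finset.prod_pos fun j _ => hc j
      positivity
    have key : α • lp.single 2 k (1 : ℝ) =
        v k - ∑ m ∈ Finset.range k, ((v k : ∀ _ : ℕ, ℝ) m) • lp.single 2 m (1 : ℝ) := by
      apply lp.ext
      funext j
      have hL : ((α • lp.single 2 k (1 : ℝ) : lp (fun _ : ℕ => ℝ) 2) : ∀ _ : ℕ, ℝ) j
          = α * (lp.single 2 k (1:ℝ) : ∀ _ : ℕ, ℝ) j := rfl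
      rw [hL]
      have hR : ((v k - ∑ m ∈ Finset.range k, ((v k : ∀ _ : ℕ, ℝ) m) • lp.single 2 m (1 : ℝ)
            : lp (fun _ : ℕ => ℝ) 2) : ∀ _ : ℕ, ℝ) j
          = (v k : ∀ _ : ℕ, ℝ) j
            - ∑ m ∈ Finset.range k, ((v k : ∀ _ : ℕ, ℝ) m) * (lp.single 2 m (1:ℝ) : ∀ _ : ℕ, ℝ) j := by
        rw [lp.coeFn_sub, Pi.sub_apply]
        congr 1
        rw [lp.coeFn_sum, Finset.sum_apply]
        refine Finset.sum_congr rfl fun m _ => ?_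
        rfl
      rw [hR]
      rcases lt_trichotomy j k with hj | hj | hj
      · rw [lp.single_apply_ne 2 k _ hj.ne, Finset.sum_eq_single j]
        · rw [lp.single_apply_self]; ring
        · intro m _ hm; rw [lp.single_apply_ne 2 m _ (Ne.symm hm), mul_zero]
        · intro h; exact absurd (Finset.mem_range.mpr hj) h
      · subst hj
        rw [lp.single_apply_self, (hcoord j).2, Finset.sum_eq_zero, sub_zero, mul_one, hα]
        intro m hm
        have hjm : j ≠ m := by have := Finset.mem_range.mp hm; omega
        rw [lp.single_apply_ne 2 m _ hjm, mul_zero]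
      · rw [lp.single_apply_ne 2 k _ hj.ne', (hcoord k).1 j hj, Finset.sum_eq_zero, sub_zero, mul_zero]
        intro m hm
        have hjm : j ≠ m := by have := Finset.mem_range.mp hm; omega
        rw [lp.single_apply_ne 2 m _ hjm, mul_zero]
    have hv_mem : v k ∈ Submodule.span ℝ (Set.range fun n : ℕ => (A ^ n) Bv) :=
      Submodule.subset_span ⟨k, rfl⟩
    have hsum_mem : (∑ m ∈ Finset.range k, ((v k : ∀ _ : ℕ, ℝ) m) • lp.single 2 m (1 : ℝ)) ∈
        Submodule.span ℝ (Set.range fun n : ℕ => (A ^ n) Bv) :=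
      Submodule.sum_mem _ fun m hm => Submodule.smul_mem _ _ (ih m (Finset.mem_range.mp hm))
    have : α • lp.single 2 k (1 : ℝ) ∈
        Submodule.span ℝ (Set.range fun n : ℕ => (A ^ n) Bv) := by
      rw [key]; exact Submodule.sub_mem _ hv_mem hsum_mem
    have := Submodule.smul_mem _ α⁻¹ this
    rwa [smul_smul, inv_mul_cancel₀ hαne, one_smul] at this

private theorem aux_dense (S : Submodule ℝ (lp (fun _ : ℕ => ℝ) 2))
    (hS : ∀ k : ℕ, lp.single 2 k (1 : ℝ) ∈ S) :
    Dense (S : Set (lp (fun _ : ℕ => ℝ) 2)) := by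
  intro x
  have hsum := lp.hasSum_single (E := fun _ : ℕ => ℝ) (p := 2) (by norm_num) x
  refine mem_closure_of_tendsto hsum ?_
  filter_upwards with s
  refine Submodule.sum_mem _ fun i _ => ?_
  have : lp.single 2 i ((x : ∀ _ : ℕ, ℝ) i) =
      ((x : ∀ _ : ℕ, ℝ) i) • (lp.single 2 i (1:ℝ) : lp (fun _ : ℕ => ℝ) 2) := by
    rw [← lp.single_smul (E := fun _ : ℕ => ℝ) 2 i ((x : ∀ _ : ℕ, ℝ) i) (1:ℝ),
      smul_eq_mul, mul_one]
  rw [this]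
  exact Submodule.smul_mem _ _ (hS i)

open Set Filter Topology in

set_option maxHeartbeats 1000000 in
set_option synthInstance.maxHeartbeats 1000000 in
private theorem aux_part3 (A : lp (fun _ : ℕ => ℝ) 2 →L[ℝ] lp (fun _ : ℕ => ℝ) 2)
    (Bv : lp (fun _ : ℕ => ℝ) 2)
    (hdense : Dense (Submodule.span ℝ (Set.range fun n : ℕ => (A ^ n) Bv) :
        Set (lp (fun _ : ℕ => ℝ) 2)))
    (x0 xF : lp (fun _ : ℕ => ℝ) 2) (ε : ℝ) (hε : 0 < ε) :
    ∃ T : ℝ, 0 < T ∧ ∃ u : ℝ → ℝ, Measurable u ∧ (∃ C : ℝ, ∀ t : ℝ, |u t| ≤ C) ∧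
      ‖NormedSpace.exp (T • A) x0 +
          (∫ τ in Set.Ioc (0 : ℝ) T, NormedSpace.exp ((T - τ) • A) (u τ • Bv)) - xF‖ < ε := by
  refine ⟨1, one_pos, ?_⟩
  set f : ℝ → lp (fun _ : ℕ => ℝ) 2 := fun s => NormedSpace.exp (s • A) Bv with hf
  have hexpc : Continuous fun s : ℝ => NormedSpace.exp (s • A) :=
    continuous_iff_continuousAt.2 fun a => (hasDerivAt_exp_smul_const' A a).continuousAt
  have hf_cont : Continuous f :=
    (ContinuousLinearMap.apply ℝ (lp (fun _ : ℕ => ℝ) 2) Bv).continuous.comp hexpc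
  obtain ⟨Cf, hCf⟩ : ∃ Cf, ∀ s ∈ Icc (0:ℝ) 1, ‖f s‖ ≤ Cf :=
    isCompact_Icc.exists_bound_of_continuousOn hf_cont.continuousOn
  have heq : ∀ (u : ℝ → ℝ) (τ : ℝ),
      NormedSpace.exp ((1 - τ) • A) (u τ • Bv) = u τ • f (1 - τ) := by
    intro u τ
    simp [hf, _root_.map_smul]
  -- integrability
  have hint : ∀ (u : ℝ → ℝ), Measurable u → ∀ C : ℝ, (∀ t, |u t| ≤ C) →
      IntegrableOn (fun τ => NormedSpace.exp ((1 - τ) • A) (u τ • Bv)) (Set.Ioc (0:ℝ) 1) := by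
    intro u hu C hC
    have hgc : Continuous fun τ : ℝ => f (1 - τ) :=
      hf_cont.comp (continuous_const.sub continuous_id)
    constructor
    · simp only [heq]
      exact hu.aestronglyMeasurable.smul hgc.aestronglyMeasurable
    · apply HasFiniteIntegral.of_bounded (C := C * Cf)
      refine (ae_restrict_iff' measurableSet_Ioc).2 (ae_of_all _ fun τ hτ => ?_)
      rw [heq]
      rw [norm_smul]
      have h1 : ‖u τ‖ ≤ C := hC τ
      have h2 : ‖f (1 - τ)‖ ≤ Cf := hCf _ ⟨by linarith [hτ.2], by linarith [hτ.1]⟩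
      have h3 : (0:ℝ) ≤ C := (abs_nonneg _).trans (hC 0)
      exact mul_le_mul h1 h2 (norm_nonneg _) h3
  -- reachable set
  set Rset : Set (lp (fun _ : ℕ => ℝ) 2) := {w | ∃ u : ℝ → ℝ, Measurable u ∧ (∃ C : ℝ, ∀ t, |u t| ≤ C) ∧
      w = ∫ τ in Set.Ioc (0:ℝ) 1, NormedSpace.exp ((1 - τ) • A) (u τ • Bv)} with hRset
  have hR0 : (0: lp (fun _ : ℕ => ℝ) 2) ∈ Rset := by
    refine ⟨0, measurable_const, ⟨0, by simp⟩, ?_⟩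
    simp only [Pi.zero_apply, zero_smul, _root_.map_zero]
    simp
  have hRadd : ∀ w1 w2 : lp (fun _ : ℕ => ℝ) 2, w1 ∈ Rset → w2 ∈ Rset → w1 + w2 ∈ Rset := by
    rintro w1 w2 ⟨u1, hu1, ⟨C1, hC1⟩, rfl⟩ ⟨u2, hu2, ⟨C2, hC2⟩, rfl⟩
    refine ⟨u1 + u2, hu1.add hu2,
      ⟨C1 + C2, fun t => (abs_add_le _ _).trans (add_le_add (hC1 t) (hC2 t))⟩, ?_⟩
    rw [← integral_add (hint u1 hu1 C1 hC1) (hint u2 hu2 C2 hC2)]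
    congr 1
    funext τ
    simp only [Pi.add_apply, add_smul, map_add]
  have hRsmul : ∀ (c : ℝ) (w : lp (fun _ : ℕ => ℝ) 2), w ∈ Rset → c • w ∈ Rset := by
    rintro c w ⟨u, hu, ⟨C, hC⟩, rfl⟩
    refine ⟨fun t => c * u t, hu.const_mul c,
      ⟨|c| * C, fun t => by rw [abs_mul]; exact mul_le_mul_of_nonneg_left (hC t) (abs_nonneg c)⟩, ?_⟩
    rw [← integral_smul]
    congr 1
    funext τ
    simp only [heq, smul_smul]
    exact (heq (fun t => c * u t) τ).symm
  let M : Submodule ℝ (lp (fun _ : ℕ => ℝ) 2) :=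
    { carrier := Rset
      zero_mem' := hR0
      add_mem' := fun h1 h2 => hRadd _ _ h1 h2
      smul_mem' := fun c w h => hRsmul c w h }
  set S := M.topologicalClosure with hS
  have hScl : IsClosed (S : Set (lp (fun _ : ℕ => ℝ) 2)) := M.isClosed_topologicalClosure
  have hRS : Rset ⊆ (S : Set (lp (fun _ : ℕ => ℝ) 2)) := subset_closure
  -- every exp(a•A)Bv with a ∈ [0,1) is in S
  have hfS : ∀ a : ℝ, 0 ≤ a → a < 1 → f a ∈ S := by
    intro a ha0 ha1
    set g : ℝ → lp (fun _ : ℕ => ℝ) 2 := fun τ => f (1 - τ) with hg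
    have hgc : Continuous g := hf_cont.comp (continuous_const.sub continuous_id)
    set F : ℝ → lp (fun _ : ℕ => ℝ) 2 := fun x => ∫ τ in (0:ℝ)..x, g τ with hF
    have hFd : HasDerivAt F (g (1 - a)) (1 - a) :=
      intervalIntegral.integral_hasDerivAt_right (hgc.intervalIntegrable _ _)
        hgc.stronglyMeasurable.stronglyMeasurableAtFilter hgc.continuousAt
    have hslope := hasDerivAt_iff_tendsto_slope.mp hFd
    have hmono : 𝓝[Set.Ioo (0:ℝ) (1-a)] (1-a) ≤ 𝓝[≠] (1-a) :=
      nhdsWithin_mono _ (fun x hx => ne_of_lt hx.2)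
    have h1 : Filter.Tendsto (slope F (1-a)) (𝓝[Set.Ioo (0:ℝ) (1-a)] (1-a)) (𝓝 (g (1-a))) :=
      hslope.mono_left hmono
    haveI : Filter.NeBot (𝓝[Set.Ioo (0:ℝ) (1-a)] (1-a)) :=
      right_nhdsWithin_Ioo_neBot (by linarith)
    have hga : g (1 - a) = f a := by rw [hg]; norm_num
    rw [← hga]
    refine hScl.mem_of_tendsto h1 ?_
    rw [Filter.eventually_iff_exists_mem]
    refine ⟨Set.Ioo 0 (1-a), self_mem_nhdsWithin, fun x hx => ?_⟩
    -- the slope is a reachable element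
    apply hRS
    set u : ℝ → ℝ := fun t => ((1-a) - x)⁻¹ * Set.indicator (Set.Ioc x (1-a)) (fun _ => (1:ℝ)) t
      with hu
    have hxlt : x < 1 - a := hx.2
    refine ⟨u, (measurable_const.indicator measurableSet_Ioc).const_mul _,
      ⟨|((1-a) - x)⁻¹|, fun t => ?_⟩, ?_⟩
    · rw [hu, abs_mul]
      have : |Set.indicator (Set.Ioc x (1-a)) (fun _ => (1:ℝ)) t| ≤ 1 := by
        by_cases ht : t ∈ Set.Ioc x (1-a) <;> simp [Set.indicator_apply, ht]
      calc |((1-a) - x)⁻¹| * |Set.indicator (Set.Ioc x (1-a)) (fun _ => (1:ℝ)) t|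
          ≤ |((1-a) - x)⁻¹| * 1 := mul_le_mul_of_nonneg_left this (abs_nonneg _)
        _ = |((1-a) - x)⁻¹| := mul_one _
    · -- slope equals the integral
      have hInt : (∫ τ in Set.Ioc (0:ℝ) 1, NormedSpace.exp ((1 - τ) • A) (u τ • Bv))
          = ((1-a) - x)⁻¹ • ∫ τ in Set.Ioc x (1-a), g τ := by
        simp only [heq]
        have hcongr : ∀ τ, u τ • g τ
            = ((1-a) - x)⁻¹ • Set.indicator (Set.Ioc x (1-a)) g τ := by
          intro τ
          by_cases ht : τ ∈ Set.Ioc x (1-a)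
          · simp only [hu, Set.indicator_of_mem ht, mul_one]
          · simp only [hu, Set.indicator_of_notMem ht, mul_zero, zero_smul, smul_zero]
        show (∫ τ in Set.Ioc (0:ℝ) 1, u τ • g τ) = _
        simp only [hcongr]
        rw [integral_smul]
        congr 1
        rw [setIntegral_indicator measurableSet_Ioc]
        have hsub : Set.Ioc (0:ℝ) 1 ∩ Set.Ioc x (1-a) = Set.Ioc x (1-a) := by
          rw [Set.inter_eq_right]
          intro t ht
          exact ⟨lt_trans hx.1 ht.1, by linarith [ht.2, ha0]⟩
        rw [hsub]
      rw [hInt]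
      have hxle : x ≤ 1 - a := le_of_lt hxlt
      have hdiff : F (1-a) - F x = ∫ τ in x..(1-a), g τ := by
        rw [hF]
        rw [← intervalIntegral.integral_interval_sub_left (hgc.intervalIntegrable _ _)
          (hgc.intervalIntegrable _ _)]
      have : slope F (1-a) x = ((1-a) - x)⁻¹ • (F (1-a) - F x) := by
        rw [slope_def_module]
        rw [← neg_sub (F (1-a)) (F x), ← neg_sub ((1-a):ℝ) x, smul_neg, inv_neg, neg_smul,
          neg_neg]
      rw [this, hdiff, intervalIntegral.integral_of_le hxle]
  -- A^n applied to exp(a A) Bv stays in S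
  have hAnS : ∀ n : ℕ, ∀ a : ℝ, 0 ≤ a → a < 1 → (A ^ n) (f a) ∈ S := by
    intro n
    induction n with
    | zero => intro a h0 h1; simpa using hfS a h0 h1
    | succ n ih =>
      intro a ha0 ha1
      have hd0 : HasDerivAt (fun s : ℝ => NormedSpace.exp (s • A))
          (A * NormedSpace.exp (a • A)) a := hasDerivAt_exp_smul_const' A a
      have hd1 : HasDerivAt f (A (f a)) a := by
        have := hd0.clm_apply (hasDerivAt_const a Bv)
        simpa [hf, ContinuousLinearMap.mul_apply] using this
      have hd : HasDerivAt (fun s => (A ^ n) (f s)) ((A ^ n) (A (f a))) a := by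
        have := (A ^ n).hasFDerivAt.comp_hasDerivAt a hd1
        exact this
      have hslope := hasDerivAt_iff_tendsto_slope.mp hd
      have hmono : 𝓝[Set.Ioo a 1] a ≤ 𝓝[≠] a :=
        nhdsWithin_mono _ (fun x hx => (ne_of_gt hx.1))
      haveI : Filter.NeBot (𝓝[Set.Ioo a 1] a) := left_nhdsWithin_Ioo_neBot ha1
      have hfinal : (A ^ (n+1)) (f a) = (A ^ n) (A (f a)) := by
        rw [pow_succ, ContinuousLinearMap.mul_apply]
      rw [hfinal]
      refine hScl.mem_of_tendsto (hslope.mono_left hmono) ?_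
      rw [Filter.eventually_iff_exists_mem]
      refine ⟨Set.Ioo a 1, self_mem_nhdsWithin, fun x hx => ?_⟩
      have hx0 : 0 ≤ x := le_of_lt (lt_of_le_of_lt ha0 hx.1)
      have hxm : (A ^ n) (f x) ∈ S := ih x hx0 hx.2
      have ham : (A ^ n) (f a) ∈ S := ih a ha0 ha1
      have hsl : slope (fun s => (A ^ n) (f s)) a x
          = (x - a)⁻¹ • ((A ^ n) (f x) - (A ^ n) (f a)) := slope_def_module _ _ _
      rw [hsl]
      exact S.smul_mem _ (S.sub_mem hxm ham)
  -- span is contained in S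
  have hspan : (Submodule.span ℝ (Set.range fun n : ℕ => (A ^ n) Bv)) ≤ S := by
    rw [Submodule.span_le]
    rintro _ ⟨n, rfl⟩
    have hBf : f 0 = Bv := by
      rw [hf]
      simp [NormedSpace.exp_zero]
    have hm := hAnS n 0 le_rfl one_pos
    rw [hBf] at hm
    exact hm
  have hSdense : Dense (S : Set (lp (fun _ : ℕ => ℝ) 2)) := hdense.mono hspan
  have hStop : ∀ y : lp (fun _ : ℕ => ℝ) 2, y ∈ (S : Set (lp (fun _ : ℕ => ℝ) 2)) := by
    intro y
    have h1 : closure (S : Set (lp (fun _ : ℕ => ℝ) 2)) = Set.univ := hSdense.closure_eq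
    rw [hScl.closure_eq] at h1
    rw [h1]
    exact Set.mem_univ y
  -- conclusion
  set y : lp (fun _ : ℕ => ℝ) 2 := xF - NormedSpace.exp ((1:ℝ) • A) x0 with hy
  have hyS : y ∈ closure Rset := by
    have h := hStop y
    have h2 : (S : Set (lp (fun _ : ℕ => ℝ) 2)) = closure Rset := by
      rw [hS, Submodule.topologicalClosure_coe]
      rfl
    rwa [h2] at h
  rcases Metric.mem_closure_iff.mp hyS ε hε with ⟨w, hwR, hwd⟩
  rcases hwR with ⟨u, hu, hubd, rfl⟩
  refine ⟨u, hu, hubd, ?_⟩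
  have heq2 : NormedSpace.exp ((1:ℝ) • A) x0 +
      (∫ τ in Set.Ioc (0:ℝ) 1, NormedSpace.exp ((1 - τ) • A) (u τ • Bv)) - xF
      = (∫ τ in Set.Ioc (0:ℝ) 1, NormedSpace.exp ((1 - τ) • A) (u τ • Bv)) - y := by
    rw [hy]
    abel
  rw [heq2, ← dist_eq_norm, dist_comm]
  exact hwd

/-- For the tridiagonal moment operator `Â` with coefficients `c_k > 0` and
`B̂ = (√2, 0, 0, …)ᵀ`, the span of `{Â^n B̂}` contains every standard basis vector,
hence is dense in `ℓ²`; consequently the moment system `ṁ = Âm + B̂u` is approximately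
controllable. -/
theorem tridiagonal_moment_system_approximately_controllable
    (A : lp (fun _ : ℕ => ℝ) 2 →L[ℝ] lp (fun _ : ℕ => ℝ) 2)
    (hA : ∀ ξ : lp (fun _ : ℕ => ℝ) 2, ∀ k : ℕ,
      (A ξ : ∀ _ : ℕ, ℝ) k =
        (if k = 0 then 0 else legendreCoeff (k - 1) * (ξ : ∀ _ : ℕ, ℝ) (k - 1))
          + legendreCoeff k * (ξ : ∀ _ : ℕ, ℝ) (k + 1))
    (Bv : lp (fun _ : ℕ => ℝ) 2)
    (hBv : ∀ k : ℕ, (Bv : ∀ _ : ℕ, ℝ) k = if k = 0 then Real.sqrt 2 else 0) :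
    (∀ k : ℕ, lp.single 2 k (1 : ℝ) ∈
        Submodule.span ℝ (Set.range fun n : ℕ => (A ^ n) Bv)) ∧
    Dense (Submodule.span ℝ (Set.range fun n : ℕ => (A ^ n) Bv) :
        Set (lp (fun _ : ℕ => ℝ) 2)) ∧
    (∀ x0 xF : lp (fun _ : ℕ => ℝ) 2, ∀ ε : ℝ, 0 < ε →
      ∃ T : ℝ, 0 < T ∧ ∃ u : ℝ → ℝ, Measurable u ∧ (∃ C : ℝ, ∀ t : ℝ, |u t| ≤ C) ∧
        ‖NormedSpace.exp (T • A) x0 +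
            (∫ τ in Set.Ioc (0 : ℝ) T, NormedSpace.exp ((T - τ) • A) (u τ • Bv)) - xF‖ < ε) := by
  have h1 := aux_part1 A hA Bv hBv
  have h2 : Dense (Submodule.span ℝ (Set.range fun n : ℕ => (A ^ n) Bv) :
      Set (lp (fun _ : ℕ => ℝ) 2)) := aux_dense _ h1
  exact ⟨h1, h2, fun x0 xF ε hε => aux_part3 A Bv h2 x0 xF ε hε⟩
end

section
/- Let A = [[0,1],[−1,0]] and consider the block-tridiagonal operator Â = C ⊗ A on ℓ²(ℝ²), where C is the tridiagonal matrix with off-diagonal entries c_k > 0, and B̂ = (√2, 0, 0, 0, …)ᵀ placed in the first coordinate of the first ℝ²-block (i.e., B̂ = e_0 ⊗ (√2, 0)ᵀ). Then the vector v = e_0 ⊗ (0,1)ᵀ is orthogonal to Â^n B̂ for all n ∈ ℕ; hence the span of {Â^n B̂} is not dense in ℓ²(ℝ²), and the harmonic-oscillator ensemble dx/dt(t,β) = β A x(t,β) + (1,0)ᵀ u(t) is not approximately controllable through its moment system. -/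
/-- For the harmonic-oscillator moment operator `Â = C ⊗ A` (with `A = [[0,1],[−1,0]]`)
and `B̂ = e₀ ⊗ (√2, 0)ᵀ`, the vector `v = e₀ ⊗ (0,1)ᵀ` is orthogonal to every `Â^n B̂`;
hence the span of `{Â^n B̂}` is not dense in `ℓ²(ℝ²)` and the oscillator ensemble is not
approximately controllable through its moment system. -/
theorem oscillator_moment_system_not_controllable
    (J : EuclideanSpace ℝ (Fin 2) →L[ℝ] EuclideanSpace ℝ (Fin 2))
    (hJ0 : ∀ x : EuclideanSpace ℝ (Fin 2), J x 0 = x 1)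
    (hJ1 : ∀ x : EuclideanSpace ℝ (Fin 2), J x 1 = -x 0)
    (A : lp (fun _ : ℕ => EuclideanSpace ℝ (Fin 2)) 2 →L[ℝ]
        lp (fun _ : ℕ => EuclideanSpace ℝ (Fin 2)) 2)
    (hA : ∀ m : lp (fun _ : ℕ => EuclideanSpace ℝ (Fin 2)) 2, ∀ k : ℕ,
      (A m : ∀ _ : ℕ, EuclideanSpace ℝ (Fin 2)) k =
        (if k = 0 then 0 else
          legendreCoeff (k - 1) • J ((m : ∀ _ : ℕ, EuclideanSpace ℝ (Fin 2)) (k - 1)))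
          + legendreCoeff k • J ((m : ∀ _ : ℕ, EuclideanSpace ℝ (Fin 2)) (k + 1)))
    (Bv : lp (fun _ : ℕ => EuclideanSpace ℝ (Fin 2)) 2)
    (hBv0 : (Bv : ∀ _ : ℕ, EuclideanSpace ℝ (Fin 2)) 0 0 = Real.sqrt 2)
    (hBv1 : (Bv : ∀ _ : ℕ, EuclideanSpace ℝ (Fin 2)) 0 1 = 0)
    (hBvk : ∀ k : ℕ, 1 ≤ k → (Bv : ∀ _ : ℕ, EuclideanSpace ℝ (Fin 2)) k = 0)
    (v : lp (fun _ : ℕ => EuclideanSpace ℝ (Fin 2)) 2)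
    (hv00 : (v : ∀ _ : ℕ, EuclideanSpace ℝ (Fin 2)) 0 0 = 0)
    (hv01 : (v : ∀ _ : ℕ, EuclideanSpace ℝ (Fin 2)) 0 1 = 1)
    (hvk : ∀ k : ℕ, 1 ≤ k → (v : ∀ _ : ℕ, EuclideanSpace ℝ (Fin 2)) k = 0) :
    (∀ n : ℕ, (inner ℝ v ((A ^ n) Bv) : ℝ) = 0) ∧
    ¬ Dense (Submodule.span ℝ (Set.range fun n : ℕ => (A ^ n) Bv) :
        Set (lp (fun _ : ℕ => EuclideanSpace ℝ (Fin 2)) 2)) := by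
  set w : ℕ → lp (fun _ : ℕ => EuclideanSpace ℝ (Fin 2)) 2 := fun n => (A ^ n) Bv with hw
  -- the parity invariant
  have key : ∀ n : ℕ,
      (∀ k : ℕ, (n + k) % 2 = 1 → (w n : ∀ _ : ℕ, EuclideanSpace ℝ (Fin 2)) k = 0) ∧
      (∀ k : ℕ, n % 2 = 0 → (w n : ∀ _ : ℕ, EuclideanSpace ℝ (Fin 2)) k 1 = 0) ∧
      (∀ k : ℕ, n % 2 = 1 → (w n : ∀ _ : ℕ, EuclideanSpace ℝ (Fin 2)) k 0 = 0) := by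
    intro n
    induction n with
    | zero =>
      have hw0 : w 0 = Bv := by simp [hw]
      refine ⟨?_, ?_, ?_⟩
      · intro k hk
        rw [hw0]
        exact hBvk k (by omega)
      · intro k _
        rw [hw0]
        rcases Nat.eq_zero_or_pos k with rfl | hk
        · exact hBv1
        · rw [hBvk k hk]; rfl
      · intro k hk; omega
    | succ n ih =>
      obtain ⟨ih1, ih2, ih3⟩ := ih
      have hstep : ∀ k : ℕ,
          (w (n + 1) : ∀ _ : ℕ, EuclideanSpace ℝ (Fin 2)) k =
            (if k = 0 then 0 else
              legendreCoeff (k - 1) • J ((w n : ∀ _ : ℕ, EuclideanSpace ℝ (Fin 2)) (k - 1)))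
              + legendreCoeff k • J ((w n : ∀ _ : ℕ, EuclideanSpace ℝ (Fin 2)) (k + 1)) := by
        intro k
        have : w (n + 1) = A (w n) := by
          simp only [hw]; rw [pow_succ', ContinuousLinearMap.mul_apply]
        rw [this]
        exact hA (w n) k
      refine ⟨?_, ?_, ?_⟩
      · intro k hk
        rw [hstep k]
        have h2 : (w n : ∀ _ : ℕ, EuclideanSpace ℝ (Fin 2)) (k + 1) = 0 :=
          ih1 (k + 1) (by omega)
        rcases Nat.eq_zero_or_pos k with rfl | hkpos
        · simp [h2]
        · have h1 : (w n : ∀ _ : ℕ, EuclideanSpace ℝ (Fin 2)) (k - 1) = 0 :=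
            ih1 (k - 1) (by omega)
          simp [h1, h2, if_neg (by omega : ¬ k = 0)]
      · intro k hpar
        have hn : n % 2 = 1 := by omega
        rw [hstep k]
        have e1 : ∀ j : ℕ, (J ((w n : ∀ _ : ℕ, EuclideanSpace ℝ (Fin 2)) j)) 1 = 0 := by
          intro j
          rw [hJ1, ih3 j hn, neg_zero]
        show ((if k = 0 then (0 : EuclideanSpace ℝ (Fin 2)) else
              legendreCoeff (k - 1) • J ((w n : ∀ _ : ℕ, EuclideanSpace ℝ (Fin 2)) (k - 1)))
              + legendreCoeff k • J ((w n : ∀ _ : ℕ, EuclideanSpace ℝ (Fin 2)) (k + 1))) 1 = 0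
        rcases Nat.eq_zero_or_pos k with rfl | hkpos
        · simp [e1]
        · simp [if_neg (by omega : ¬ k = 0), e1]
      · intro k hpar
        have hn : n % 2 = 0 := by omega
        rw [hstep k]
        have e0 : ∀ j : ℕ, (J ((w n : ∀ _ : ℕ, EuclideanSpace ℝ (Fin 2)) j)) 0 = 0 := by
          intro j
          rw [hJ0, ih2 j hn]
        show ((if k = 0 then (0 : EuclideanSpace ℝ (Fin 2)) else
              legendreCoeff (k - 1) • J ((w n : ∀ _ : ℕ, EuclideanSpace ℝ (Fin 2)) (k - 1)))
              + legendreCoeff k • J ((w n : ∀ _ : ℕ, EuclideanSpace ℝ (Fin 2)) (k + 1))) 0 = 0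
        rcases Nat.eq_zero_or_pos k with rfl | hkpos
        · simp [e0]
        · simp [if_neg (by omega : ¬ k = 0), e0]
  -- orthogonality
  have horth : ∀ n : ℕ, (inner ℝ v ((A ^ n) Bv) : ℝ) = 0 := by
    intro n
    have : (inner ℝ v (w n) : ℝ) = ∑' k, (inner ℝ ((v : ∀ _ : ℕ, EuclideanSpace ℝ (Fin 2)) k)
        ((w n : ∀ _ : ℕ, EuclideanSpace ℝ (Fin 2)) k) : ℝ) := lp.inner_eq_tsum v (w n)
    simp only [hw] at this
    rw [this]
    have hterm : ∀ k : ℕ, (inner ℝ ((v : ∀ _ : ℕ, EuclideanSpace ℝ (Fin 2)) k)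
        (((A ^ n) Bv : ∀ _ : ℕ, EuclideanSpace ℝ (Fin 2)) k) : ℝ) = 0 := by
      intro k
      rcases Nat.eq_zero_or_pos k with rfl | hkpos
      · rcases Nat.even_or_odd n with he | ho
        · have h1 : ((A ^ n) Bv : ∀ _ : ℕ, EuclideanSpace ℝ (Fin 2)) 0 1 = 0 :=
            (key n).2.1 0 (Nat.even_iff.mp he)
          rw [PiLp.inner_apply]
          simp at h1
          simp [Fin.sum_univ_two, hv00, h1]
        · have h1 : ((A ^ n) Bv : ∀ _ : ℕ, EuclideanSpace ℝ (Fin 2)) 0 = 0 :=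
            (key n).1 0 (by have := Nat.odd_iff.mp ho; omega)
          rw [h1, inner_zero_right]
      · rw [hvk k hkpos, inner_zero_left]
    rw [tsum_congr hterm]
    exact tsum_zero
  refine ⟨horth, ?_⟩
  intro hdense
  have hclos : (Submodule.span ℝ (Set.range fun n : ℕ => (A ^ n) Bv)).topologicalClosure = ⊤ :=
    Submodule.dense_iff_topologicalClosure_eq_top.mp hdense
  have hbot : (Submodule.span ℝ (Set.range fun n : ℕ => (A ^ n) Bv))ᗮ = ⊥ :=
    Submodule.topologicalClosure_eq_top_iff.mp hclos
  have hvmem : v ∈ (Submodule.span ℝ (Set.range fun n : ℕ => (A ^ n) Bv))ᗮ := by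
    rw [Submodule.mem_orthogonal]
    intro u hu
    induction hu using Submodule.span_induction with
    | mem x hx =>
      obtain ⟨n, rfl⟩ := hx
      rw [real_inner_comm]
      exact horth n
    | zero => exact inner_zero_left v
    | add x y _ _ hx hy => rw [inner_add_left, hx, hy, add_zero]
    | smul c x _ hx => rw [inner_smul_left, hx, mul_zero]
  rw [hbot, Submodule.mem_bot] at hvmem
  have : (v : ∀ _ : ℕ, EuclideanSpace ℝ (Fin 2)) 0 1 = 0 := by
    rw [hvmem]; rfl
  rw [hv01] at this
  exact one_ne_zero this
end

section
/- Let D be a bounded self-adjoint b-banded infinite matrix on ℓ² with spectrum contained in [−1,1], and let F be a function analytic on a neighborhood of the closed Bernstein ellipse E_χ (χ > 1) with M(χ) = max_{z ∈ E_χ} |F(z)|. Then the entries of F(D) decay exponentially: |[F(D)]_{ij}| ≤ K ρ^{|i−j|} with ρ = χ^{−2/b} and K = max{2χM(χ)/(χ−1), ‖F(D)‖}. -/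
open scoped ComplexOrder

/-- The closed Bernstein ellipse `E_χ` with foci `±1` and semi-axes
`(χ+χ⁻¹)/2`, `(χ−χ⁻¹)/2`. -/
def bernsteinEllipse (χ : ℝ) : Set ℂ :=
  {z : ℂ | z.re ^ 2 / (χ + χ⁻¹) ^ 2 + z.im ^ 2 / (χ - χ⁻¹) ^ 2 ≤ 1 / 4}


noncomputable section BenziGolubAux
open Real

namespace BenziGolubAux


lemma real_mem_ellipse {χ : ℝ} (hχ : 1 < χ) {x : ℝ} (hx : x ∈ Set.Icc (-1 : ℝ) 1) :
    (x : ℂ) ∈ bernsteinEllipse χ := by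
  obtain ⟨h1, h2⟩ := hx
  have hχ0 : 0 < χ := by linarith
  have hinv : 0 < χ⁻¹ := by positivity
  have hA : (2:ℝ) < χ + χ⁻¹ := by
    nlinarith [pow_pos (show (0:ℝ) < χ - 1 by linarith) 2, mul_inv_cancel₀ (ne_of_gt hχ0)]
  simp only [bernsteinEllipse, Set.mem_setOf_eq, Complex.ofReal_re, Complex.ofReal_im]
  have hx2 : x ^ 2 ≤ 1 := by nlinarith
  have h4 : (4:ℝ) < (χ + χ⁻¹) ^ 2 := by nlinarith
  have : x ^ 2 / (χ + χ⁻¹) ^ 2 ≤ 1 / 4 := by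
    rw [div_le_div_iff₀ (by positivity) (by norm_num)]
    nlinarith
  simpa using this

lemma joukowski_mem_ellipse {χ : ℝ} (hχ : 1 < χ) {w : ℂ}
    (h1 : χ⁻¹ ≤ ‖w‖) (h2 : ‖w‖ ≤ χ) :
    (w + w⁻¹) / 2 ∈ bernsteinEllipse χ := by
  have hχ0 : 0 < χ := by linarith
  have hw0 : 0 < ‖w‖ := lt_of_lt_of_le (by positivity) h1
  set s : ℝ := Complex.normSq w with hs
  have hs_abs : s = ‖w‖ ^ 2 := (Complex.sq_norm w).symm
  have hs0 : 0 < s := by rw [hs_abs]; positivity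
  have hslo : χ⁻¹ ^ 2 ≤ s := by rw [hs_abs]; exact pow_le_pow_left₀ (by positivity) h1 2
  have hshi : s ≤ χ ^ 2 := by rw [hs_abs]; exact pow_le_pow_left₀ (by positivity) h2 2
  have hkey : s + s⁻¹ ≤ χ ^ 2 + (χ ^ 2)⁻¹ := by
    rw [← sub_nonneg]
    have e : χ ^ 2 + (χ ^ 2)⁻¹ - (s + s⁻¹) = (χ ^ 2 - s) * (s - (χ ^ 2)⁻¹) / s := by
      field_simp; ring
    rw [e]
    apply div_nonneg _ (by positivity)
    apply mul_nonneg (by linarith)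
    have : (χ ^ 2)⁻¹ ≤ s := by
      calc (χ ^ 2)⁻¹ = χ⁻¹ ^ 2 := by rw [inv_pow]
      _ ≤ s := hslo
    linarith
  have hre : ((w + w⁻¹) / 2).re = w.re * (1 + s⁻¹) / 2 := by
    simp [Complex.add_re, Complex.div_re, Complex.inv_re, ← hs]
    field_simp
  have him : ((w + w⁻¹) / 2).im = w.im * (1 - s⁻¹) / 2 := by
    simp [Complex.add_im, Complex.inv_im, ← hs]
    field_simp
    ring
  have hA : 0 < (χ + χ⁻¹) ^ 2 := by positivity
  have hB : 0 < (χ - χ⁻¹) ^ 2 := by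
    have : χ⁻¹ < 1 := by rw [inv_lt_one_iff₀]; right; exact hχ
    have : 0 < χ - χ⁻¹ := by linarith
    positivity
  have hresq : w.re ^ 2 + w.im ^ 2 = s := by
    rw [hs, Complex.normSq_apply]; ring
  have t1 : (w.re * (1 + s⁻¹) / 2) ^ 2 / (χ + χ⁻¹) ^ 2 ≤ w.re ^ 2 / (4 * s) := by
    rw [div_le_div_iff₀ hA (by positivity)]
    have key : (1 + s⁻¹) ^ 2 * s ≤ (χ + χ⁻¹) ^ 2 := by
      have e1 : (1 + s⁻¹) ^ 2 * s = s + 2 + s⁻¹ := by field_simp; ring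
      have e2 : (χ + χ⁻¹) ^ 2 = χ ^ 2 + 2 + (χ ^ 2)⁻¹ := by field_simp; ring
      rw [e1, e2]; linarith
    nlinarith [sq_nonneg w.re, sq_nonneg (w.re * (1 + s⁻¹)), hs0.le]
  have t2 : (w.im * (1 - s⁻¹) / 2) ^ 2 / (χ - χ⁻¹) ^ 2 ≤ w.im ^ 2 / (4 * s) := by
    rw [div_le_div_iff₀ hB (by positivity)]
    have key : (1 - s⁻¹) ^ 2 * s ≤ (χ - χ⁻¹) ^ 2 := by
      have e1 : (1 - s⁻¹) ^ 2 * s = s - 2 + s⁻¹ := by field_simp; ring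
      have e2 : (χ - χ⁻¹) ^ 2 = χ ^ 2 - 2 + (χ ^ 2)⁻¹ := by field_simp; ring
      rw [e1, e2]; linarith
    nlinarith [sq_nonneg w.im, hs0.le]
  simp only [bernsteinEllipse, Set.mem_setOf_eq, hre, him]
  calc (w.re * (1 + s⁻¹) / 2) ^ 2 / (χ + χ⁻¹) ^ 2 + (w.im * (1 - s⁻¹) / 2) ^ 2 / (χ - χ⁻¹) ^ 2
      ≤ w.re ^ 2 / (4 * s) + w.im ^ 2 / (4 * s) := by linarith
    _ = 1 / 4 := by rw [← add_div, hresq, div_eq_div_iff (by positivity) (by norm_num)]; ring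

abbrev H2 := lp (fun _ : ℕ => ℂ) 2



noncomputable def ee (i : ℕ) : H2 := lp.single 2 i (1 : ℂ)

lemma inner_ee_left (i : ℕ) (f : H2) : (inner ℂ (ee i) f : ℂ) = f i := by
  rw [ee, lp.inner_single_left]
  simp [RCLike.inner_apply]

lemma single_eq_smul_ee (m : ℕ) (c : ℂ) : lp.single 2 m c = c • ee m := by
  rw [ee, ← lp.single_smul]
  norm_num

lemma hasSum_entry_mul (A B : H2 →L[ℂ] H2) (i j : ℕ) :
    HasSum (fun m => (inner ℂ (ee m) (B (ee j)) : ℂ) * (inner ℂ (ee i) (A (ee m)) : ℂ))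
      (inner ℂ (ee i) ((A * B) (ee j)) : ℂ) := by
  have h1 : HasSum (fun m : ℕ => lp.single 2 m ((B (ee j)) m)) (B (ee j)) :=
    lp.hasSum_single (by norm_num) (B (ee j))
  have h3 := (innerSL ℂ (ee i)).hasSum (A.hasSum h1)
  have key : ∀ m : ℕ, (innerSL ℂ (ee i)) (A (lp.single 2 m ((B (ee j)) m)))
      = (inner ℂ (ee m) (B (ee j)) : ℂ) * (inner ℂ (ee i) (A (ee m)) : ℂ) := by
    intro m
    rw [single_eq_smul_ee, map_smul, map_smul]
    simp only [innerSL_apply_apply, inner_ee_left, smul_eq_mul]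

  simpa [key, ContinuousLinearMap.mul_apply, innerSL_apply_apply] using h3

lemma banded_pow (D : H2 →L[ℂ] H2) (c : ℕ)
    (hband : ∀ i j : ℕ, (c : ℝ) < |(i : ℝ) - (j : ℝ)| → (inner ℂ (ee i) (D (ee j)) : ℂ) = 0) :
    ∀ k i j : ℕ, ((k * c : ℕ) : ℝ) < |(i : ℝ) - (j : ℝ)| →
      (inner ℂ (ee i) ((D ^ k) (ee j)) : ℂ) = 0 := by
  intro k
  induction k with
  | zero =>
    intro i j h
    have hij : i ≠ j := by
      intro h'; subst h'; simp at h
    rw [pow_zero, ContinuousLinearMap.one_apply, inner_ee_left]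
    simp [ee, lp.single_apply, hij]
  | succ k ih =>
    intro i j h
    rw [pow_succ']
    have hs := hasSum_entry_mul D (D ^ k) i j
    have hz : ∀ m : ℕ, (inner ℂ (ee m) ((D ^ k) (ee j)) : ℂ) * (inner ℂ (ee i) (D (ee m)) : ℂ) = 0 := by
      intro m
      rcases le_or_gt (|(m : ℝ) - (j : ℝ)|) ((k * c : ℕ) : ℝ) with hm | hm
      · have htri : |(i : ℝ) - (j : ℝ)| ≤ |(i : ℝ) - (m : ℝ)| + |(m : ℝ) - (j : ℝ)| :=
          abs_sub_le _ _ _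
        have hc : (c : ℝ) < |(i : ℝ) - (m : ℝ)| := by
          push_cast at h hm ⊢
          nlinarith
        rw [hband i m hc, mul_zero]
      · rw [ih m j hm, zero_mul]
    simp_rw [hz] at hs
    exact hs.unique hasSum_zero

lemma banded_aeval (D : H2 →L[ℂ] H2) (c : ℕ)
    (hband : ∀ i j : ℕ, (c : ℝ) < |(i : ℝ) - (j : ℝ)| → (inner ℂ (ee i) (D (ee j)) : ℂ) = 0)
    (q : Polynomial ℂ) (k : ℕ) (hq : q.natDegree < k + 1) (i j : ℕ)
    (h : ((k * c : ℕ) : ℝ) < |(i : ℝ) - (j : ℝ)|) :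
    (inner ℂ (ee i) ((Polynomial.aeval D q) (ee j)) : ℂ) = 0 := by
  rw [Polynomial.aeval_eq_sum_range' hq]
  rw [ContinuousLinearMap.sum_apply, inner_sum]
  refine Finset.sum_eq_zero fun n hn => ?_
  rw [Finset.mem_range] at hn
  have hn' : ((n * c : ℕ) : ℝ) < |(i : ℝ) - (j : ℝ)| := by
    refine lt_of_le_of_lt ?_ h
    push_cast
    have : (n : ℝ) ≤ k := by exact_mod_cast Nat.lt_succ_iff.mp hn
    nlinarith [abs_nonneg ((i : ℝ) - (j : ℝ))]
  rw [ContinuousLinearMap.smul_apply, inner_smul_right, banded_pow D c hband n i j hn', mul_zero]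


lemma entry_norm_le (A : H2 →L[ℂ] H2) (i j : ℕ) : ‖(inner ℂ (ee i) (A (ee j)) : ℂ)‖ ≤ ‖A‖ := by
  have h1 : ‖ee i‖ = 1 := by
    have := lp.norm_single (p := 2) (E := fun _ : ℕ => ℂ) (by norm_num) i (1 : ℂ)
    simpa [ee] using this
  have h2 : ‖ee j‖ = 1 := by
    have := lp.norm_single (p := 2) (E := fun _ : ℕ => ℂ) (by norm_num) j (1 : ℂ)
    simpa [ee] using this
  calc ‖(inner ℂ (ee i) (A (ee j)) : ℂ)‖ ≤ ‖ee i‖ * ‖A (ee j)‖ := norm_inner_le_norm _ _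
    _ = ‖A (ee j)‖ := by rw [h1, one_mul]
    _ ≤ ‖A‖ * ‖ee j‖ := A.le_opNorm _
    _ = ‖A‖ := by rw [h2, mul_one]


instance bgFact2pi : Fact (0 < 2 * π) := ⟨by positivity⟩

def bgCos : AddCircle (2 * π) → ℂ := fun x => (fourier 1 x + fourier (-1) x) / 2


lemma bgCos_coe (θ : ℝ) : bgCos (θ : AddCircle (2 * π)) = Complex.cos θ := by
  have hπ : (π : ℂ) ≠ 0 := Complex.ofReal_ne_zero.mpr Real.pi_ne_zero
  simp only [bgCos, fourier_coe_apply, Complex.cos]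
  push_cast
  congr 2
  · congr 1; field_simp
  · congr 1; field_simp


variable {χ : ℝ} {F : ℂ → ℂ} {Mχ : ℝ}


lemma bgF_coeff_bound (hχ : 1 < χ) (hF : AnalyticOnNhd ℂ F (bernsteinEllipse χ))
    (hMχ : ∀ z ∈ bernsteinEllipse χ, ‖F z‖ ≤ Mχ) (n : ℤ) :
    ‖fourierCoeff (fun x : AddCircle (2 * π) => F (bgCos x)) n‖ ≤ Mχ * χ⁻¹ ^ n.natAbs := by
  set f : AddCircle (2 * π) → ℂ := fun x => F (bgCos x) with hf
  have hχ0 : (0:ℝ) < χ := by linarith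
  have hinv0 : (0:ℝ) < χ⁻¹ := by positivity
  have hπ : (π : ℂ) ≠ 0 := Complex.ofReal_ne_zero.mpr Real.pi_ne_zero
  set G : ℂ → ℂ := fun w => w ^ (-n - 1) * F ((w + w⁻¹) / 2) with hGdef
  have hGdiff : ∀ z : ℂ, χ⁻¹ ≤ ‖z‖ → ‖z‖ ≤ χ → DifferentiableAt ℂ G z := by
    intro z h1 h2
    have hz0 : z ≠ 0 := by
      intro h
      rw [h, norm_zero] at h1
      linarith
    have hd1 : DifferentiableAt ℂ (fun w : ℂ => w ^ (-n - 1)) z :=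
      differentiableAt_zpow.mpr (Or.inl hz0)
    have hd2 : DifferentiableAt ℂ (fun w : ℂ => (w + w⁻¹) / 2) z :=
      (differentiableAt_id.add (differentiableAt_inv hz0)).div_const 2
    have hd3 : DifferentiableAt ℂ F ((z + z⁻¹) / 2) :=
      (hF _ (joukowski_mem_ellipse hχ h1 h2)).differentiableAt
    exact hd1.mul (hd3.comp z hd2)
  have hsphere : ∀ ρ : ℝ, χ⁻¹ ≤ ρ → ρ ≤ χ → ∀ z ∈ Metric.sphere (0:ℂ) ρ,
      ‖G z‖ ≤ ρ ^ (-n - 1) * Mχ := by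
    intro ρ hρ1 hρ2 z hz
    have hρ0 : 0 < ρ := lt_of_lt_of_le hinv0 hρ1
    rw [mem_sphere_zero_iff_norm] at hz
    have habs : ‖z‖ = ρ := hz
    calc ‖G z‖ = ρ ^ (-n - 1) * ‖F ((z + z⁻¹) / 2)‖ := by
          rw [hGdef, norm_mul, norm_zpow, hz]
      _ ≤ ρ ^ (-n - 1) * Mχ := by
          have h0 : (0:ℝ) ≤ ρ ^ (-n - 1) := (zpow_pos hρ0 _).le
          exact mul_le_mul_of_nonneg_left
            (hMχ _ (joukowski_mem_ellipse hχ (habs ▸ hρ1) (habs ▸ hρ2))) h0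
  have hpt : ∀ θ : ℝ, deriv (circleMap 0 1) θ • G (circleMap 0 1 θ)
      = Complex.I * ((fourier (-n)) (θ : AddCircle (2*π)) • f (θ : AddCircle (2*π))) := by
    intro θ
    have he : circleMap 0 1 θ = Complex.exp (θ * Complex.I) := by
      rw [circleMap_zero]; rw [Complex.ofReal_one, one_mul]
    have hene : Complex.exp ((θ:ℂ) * Complex.I) ≠ 0 := Complex.exp_ne_zero _
    rw [deriv_circleMap, he]
    have hcos : (Complex.exp ((θ:ℂ) * Complex.I) + (Complex.exp ((θ:ℂ) * Complex.I))⁻¹) / 2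
        = Complex.cos θ := by
      rw [← Complex.exp_neg, Complex.cos]
      ring_nf
    have hfour : (fourier (-n)) (θ : AddCircle (2*π)) = Complex.exp ((θ:ℂ) * Complex.I) ^ (-n) := by
      rw [fourier_coe_apply, ← Complex.exp_int_mul]
      congr 1
      push_cast
      field_simp
    have hzp : Complex.exp ((θ:ℂ) * Complex.I) * Complex.exp ((θ:ℂ) * Complex.I) ^ (-n - 1)
        = Complex.exp ((θ:ℂ) * Complex.I) ^ (-n) := by
      rw [← zpow_one_add₀ hene]
      congr 1
      ring
    have hbg : f ((θ : ℝ) : AddCircle (2*π)) = F (Complex.cos θ) := by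
      rw [hf]; simp only; rw [bgCos_coe]
    simp only [hGdef, smul_eq_mul, hbg, hcos, hfour]
    calc Complex.exp ((θ:ℂ) * Complex.I) * Complex.I
          * (Complex.exp ((θ:ℂ) * Complex.I) ^ (-n - 1) * F (Complex.cos θ))
        = Complex.I * ((Complex.exp ((θ:ℂ) * Complex.I)
            * Complex.exp ((θ:ℂ) * Complex.I) ^ (-n - 1)) * F (Complex.cos θ)) := by ring
      _ = Complex.I * (Complex.exp ((θ:ℂ) * Complex.I) ^ (-n) * F (Complex.cos θ)) := by rw [hzp]
  have hint : (∮ z in C(0, 1), G z) = Complex.I * ((2 * π : ℝ) • fourierCoeff f n) := by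
    rw [circleIntegral]
    simp_rw [hpt]
    rw [intervalIntegral.integral_const_mul]
    congr 1
    rw [fourierCoeff_eq_intervalIntegral f n 0, zero_add, smul_smul]
    rw [mul_one_div_cancel (by positivity : (2 * π : ℝ) ≠ 0), one_smul]
  have hnorm1 : ‖(∮ z in C(0, 1), G z)‖ = 2 * π * ‖fourierCoeff f n‖ := by
    rw [hint, norm_mul, Complex.norm_I, one_mul, norm_smul]
    rw [Real.norm_eq_abs, abs_of_pos (by positivity : (0:ℝ) < 2 * π)]
  have hχinv1 : χ⁻¹ ≤ 1 := by rw [inv_le_one_iff₀]; right; exact hχ.le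
  have hfinal : ∀ ρ : ℝ, 0 < ρ → ‖(∮ z in C(0, 1), G z)‖ ≤ 2 * π * ρ * (ρ ^ (-n - 1) * Mχ) →
      ‖fourierCoeff f n‖ ≤ ρ ^ (-n) * Mχ := by
    intro ρ hρ hle
    have h2 : 2 * π * ρ * (ρ ^ (-n - 1) * Mχ) = 2 * π * (ρ ^ (-n) * Mχ) := by
      rw [show 2 * π * ρ * (ρ ^ (-n - 1) * Mχ) = 2 * π * ((ρ * ρ ^ (-n - 1)) * Mχ) by ring,
        ← zpow_one_add₀ (ne_of_gt hρ)]
      norm_num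
    rw [hnorm1, h2] at hle
    exact le_of_mul_le_mul_left hle (by positivity)
  rcases le_or_gt 0 n with hn | hn
  · have hc : ContinuousOn G (Metric.closedBall (0:ℂ) χ \ Metric.ball 0 1) := by
      intro z hz
      obtain ⟨hz1, hz2⟩ := hz
      rw [Metric.mem_closedBall, dist_zero_right] at hz1
      rw [Metric.mem_ball, dist_zero_right, not_lt] at hz2
      exact (hGdiff z (le_trans hχinv1 hz2) hz1).continuousAt.continuousWithinAt
    have hd : ∀ z ∈ (Metric.ball (0:ℂ) χ \ Metric.closedBall 0 1) \ (∅ : Set ℂ),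
        DifferentiableAt ℂ G z := by
      intro z hz
      obtain ⟨⟨hz1, hz2⟩, -⟩ := hz
      rw [Metric.mem_ball, dist_zero_right] at hz1
      rw [Metric.mem_closedBall, dist_zero_right, not_le] at hz2
      exact hGdiff z (le_trans hχinv1 hz2.le) hz1.le
    have heq := Complex.circleIntegral_eq_of_differentiable_on_annulus_off_countable
      zero_lt_one hχ.le Set.countable_empty hc hd
    have hb := circleIntegral.norm_integral_le_of_norm_le_const (f := G) (c := 0) (R := χ)
      hχ0.le (hsphere χ (le_trans hχinv1 hχ.le) le_rfl)
    rw [heq] at hb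
    have := hfinal χ hχ0 hb
    calc ‖fourierCoeff f n‖ ≤ χ ^ (-n) * Mχ := this
      _ = Mχ * χ⁻¹ ^ n.natAbs := by
          have h1 : n = (n.natAbs : ℤ) := by omega
          conv_lhs => rw [h1]
          rw [zpow_neg, zpow_natCast, ← inv_pow, mul_comm]
  · have hc : ContinuousOn G (Metric.closedBall (0:ℂ) 1 \ Metric.ball 0 χ⁻¹) := by
      intro z hz
      obtain ⟨hz1, hz2⟩ := hz
      rw [Metric.mem_closedBall, dist_zero_right] at hz1
      rw [Metric.mem_ball, dist_zero_right, not_lt] at hz2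
      exact (hGdiff z hz2 (le_trans hz1 hχ.le)).continuousAt.continuousWithinAt
    have hd : ∀ z ∈ (Metric.ball (0:ℂ) 1 \ Metric.closedBall 0 χ⁻¹) \ (∅ : Set ℂ),
        DifferentiableAt ℂ G z := by
      intro z hz
      obtain ⟨⟨hz1, hz2⟩, -⟩ := hz
      rw [Metric.mem_ball, dist_zero_right] at hz1
      rw [Metric.mem_closedBall, dist_zero_right, not_le] at hz2
      exact hGdiff z hz2.le (le_trans hz1.le hχ.le)
    have heq := Complex.circleIntegral_eq_of_differentiable_on_annulus_off_countable
      hinv0 hχinv1 Set.countable_empty hc hd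
    have hb := circleIntegral.norm_integral_le_of_norm_le_const (f := G) (c := 0) (R := χ⁻¹)
      hinv0.le (hsphere χ⁻¹ le_rfl (le_trans hχinv1 hχ.le))
    rw [← heq] at hb
    have := hfinal χ⁻¹ hinv0 hb
    calc ‖fourierCoeff f n‖ ≤ (χ⁻¹) ^ (-n) * Mχ := this
      _ = Mχ * χ⁻¹ ^ n.natAbs := by
          have h1 : -n = (n.natAbs : ℤ) := by omega
          conv_lhs => rw [h1]
          rw [zpow_natCast, mul_comm]



lemma bgF_coeff_even (F : ℂ → ℂ) (n : ℤ) :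
    fourierCoeff (fun x : AddCircle (2 * π) => F (bgCos x)) (-n)
      = fourierCoeff (fun x : AddCircle (2 * π) => F (bgCos x)) n := by
  rw [fourierCoeff_eq_intervalIntegral _ _ (-π), fourierCoeff_eq_intervalIntegral _ _ (-π)]
  congr 1
  have hlim : -π + 2 * π = π := by ring
  rw [hlim, neg_neg]
  have hcn := intervalIntegral.integral_comp_neg (a := -π) (b := π)
    (fun x : ℝ => (fourier n (x : AddCircle (2 * π))) • F (bgCos (x : AddCircle (2 * π))))
  rw [neg_neg] at hcn
  rw [← hcn]
  apply intervalIntegral.integral_congr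
  intro x _
  simp only
  have h1 : (fourier n) ((-x : ℝ) : AddCircle (2 * π)) = (fourier (-n)) ((x : ℝ) : AddCircle (2 * π)) := by
    rw [fourier_coe_apply, fourier_coe_apply]
    congr 1
    push_cast
    ring
  have h2 : bgCos ((-x : ℝ) : AddCircle (2 * π)) = bgCos ((x : ℝ) : AddCircle (2 * π)) := by
    rw [bgCos_coe, bgCos_coe]
    push_cast
    rw [Complex.cos_neg]
  rw [h1, h2]

lemma bgF_continuous (hχ : 1 < χ) (hF : AnalyticOnNhd ℂ F (bernsteinEllipse χ)) :
    Continuous (fun x : AddCircle (2 * π) => F (bgCos x)) := by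
  have hbg : Continuous bgCos :=
    ((fourier 1).continuous.add (fourier (-1)).continuous).div_const 2
  rw [continuous_iff_continuousAt]
  intro x
  refine ContinuousAt.comp ?_ hbg.continuousAt
  obtain ⟨θ, rfl⟩ := QuotientAddGroup.mk_surjective x
  have hmem : bgCos (θ : AddCircle (2 * π)) ∈ bernsteinEllipse χ := by
    rw [bgCos_coe, ← Complex.ofReal_cos]
    exact real_mem_ellipse hχ ⟨Real.neg_one_le_cos θ, Real.cos_le_one θ⟩
  exact (hF _ hmem).continuousAt

lemma natDegree_T_le : ∀ m : ℕ, (Polynomial.Chebyshev.T ℂ (m : ℤ)).natDegree ≤ m := by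
  intro m
  induction m using Nat.strong_induction_on with
  | _ m ih =>
    match m with
    | 0 => simp
    | 1 => simp
    | (m + 2) =>
      have hcast : ((m + 2 : ℕ) : ℤ) = (m : ℤ) + 2 := by push_cast; ring
      rw [hcast, Polynomial.Chebyshev.T_add_two]
      refine le_trans (Polynomial.natDegree_sub_le _ _) ?_
      rw [max_le_iff]
      constructor
      · refine le_trans Polynomial.natDegree_mul_le ?_
        have h1 : (2 * Polynomial.X : Polynomial ℂ).natDegree ≤ 1 := by compute_degree
        have h2 : (Polynomial.Chebyshev.T ℂ ((m : ℤ) + 1)).natDegree ≤ m + 1 := by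
          have : ((m : ℤ) + 1) = ((m + 1 : ℕ) : ℤ) := by push_cast; ring
          rw [this]
          exact ih (m + 1) (by omega)
        omega
      · exact le_trans (ih m (by omega)) (by omega)

lemma sum_Icc_int (g : ℤ → ℂ) (k : ℕ) :
    ∑ n ∈ Finset.Icc (-(k : ℤ)) k, g n
      = g 0 + ∑ m ∈ Finset.range k, (g (m + 1) + g (-(m + 1))) := by
  induction k with
  | zero => simp
  | succ k ih =>
    have h1 : Finset.Icc (-(k + 1 : ℕ) : ℤ) ((k + 1 : ℕ) : ℤ)
        = insert ((k + 1 : ℕ) : ℤ) (insert (-(k + 1 : ℕ) : ℤ) (Finset.Icc (-(k : ℕ) : ℤ) k)) := by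
      ext n
      simp only [Finset.mem_Icc, Finset.mem_insert]
      omega
    rw [h1, Finset.sum_insert, Finset.sum_insert, ih, Finset.sum_range_succ]
    · push_cast
      ring
    · simp only [Finset.mem_Icc]
      omega
    · simp only [Finset.mem_insert, Finset.mem_Icc]
      omega

lemma geo_tail {r : ℝ} (h0 : 0 ≤ r) (h1 : r < 1) (C : ℝ) (K : ℕ) :
    HasSum (fun m : ℕ => if m < K then 0 else C * r ^ m) (C * r ^ K / (1 - r)) := by
  have hne : r ≠ 1 := ne_of_lt h1
  have hgeo : HasSum (fun m : ℕ => C * r ^ m) (C * (1 - r)⁻¹) :=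
    (hasSum_geometric_of_lt_one h0 h1).mul_left C
  have hfin : HasSum (fun m : ℕ => if m < K then C * r ^ m else 0)
      (∑ m ∈ Finset.range K, if m < K then C * r ^ m else 0) := by
    apply hasSum_sum_of_ne_finset_zero
    intro b hb
    simp only [Finset.mem_range] at hb
    simp [hb]
  have hsum : (∑ m ∈ Finset.range K, if m < K then C * r ^ m else 0)
      = C * ((r ^ K - 1) / (r - 1)) := by
    have hcg : ∀ m ∈ Finset.range K, (if m < K then C * r ^ m else 0) = C * r ^ m :=
      fun m hm => by simp [Finset.mem_range.mp hm]
    rw [Finset.sum_congr rfl hcg, ← Finset.mul_sum, geom_sum_eq hne]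
  rw [hsum] at hfin
  have := hgeo.sub hfin
  have hfx : (fun m : ℕ => C * r ^ m - if m < K then C * r ^ m else 0)
      = fun m : ℕ => if m < K then 0 else C * r ^ m := by
    funext m
    split_ifs <;> ring
  rw [hfx] at this
  convert this using 1
  have hr1 : (1 : ℝ) - r ≠ 0 := by intro h; apply hne; linarith
  have hr2 : r - 1 ≠ 0 := by intro h; apply hne; linarith
  · rfl
  field_simp
  ring

lemma fourier_coe_exp (n : ℤ) (θ : ℝ) :
    (fourier n) ((θ : ℝ) : AddCircle (2 * π)) = Complex.exp ((n : ℂ) * θ * Complex.I) := by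
  have hπ : (π : ℂ) ≠ 0 := Complex.ofReal_ne_zero.mpr Real.pi_ne_zero
  rw [fourier_coe_apply]
  congr 1
  push_cast
  field_simp

lemma cheb_approx (hχ : 1 < χ) (hF : AnalyticOnNhd ℂ F (bernsteinEllipse χ))
    (hMχ : ∀ z ∈ bernsteinEllipse χ, ‖F z‖ ≤ Mχ) (hM0 : 0 ≤ Mχ) (k : ℕ) :
    ∃ q : Polynomial ℂ, q.natDegree ≤ k ∧ ∀ x : ℝ, x ∈ Set.Icc (-1 : ℝ) 1 →
      ‖F (x : ℂ) - q.eval (x : ℂ)‖ ≤ 2 * Mχ * χ⁻¹ ^ k / (χ - 1) := by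
  have hχ0 : (0 : ℝ) < χ := by linarith
  have hr0 : (0 : ℝ) ≤ χ⁻¹ := by positivity
  have hr1 : χ⁻¹ < 1 := by rw [inv_lt_one_iff₀]; right; exact hχ
  set f : AddCircle (2 * π) → ℂ := fun x => F (bgCos x) with hf
  set c : ℤ → ℂ := fourierCoeff f with hc
  have hbound : ∀ n : ℤ, ‖c n‖ ≤ Mχ * χ⁻¹ ^ n.natAbs := bgF_coeff_bound hχ hF hMχ
  have hgsum : Summable (fun n : ℤ => Mχ * χ⁻¹ ^ n.natAbs) := by
    apply Summable.of_nat_of_neg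
    · simp only [Int.natAbs_natCast]
      exact ((summable_geometric_of_lt_one hr0 hr1).mul_left Mχ)
    · simp only [Int.natAbs_neg, Int.natAbs_natCast]
      exact ((summable_geometric_of_lt_one hr0 hr1).mul_left Mχ)
  have hsummable : Summable c := Summable.of_norm_bounded hgsum hbound
  set fc : C(AddCircle (2 * π), ℂ) := ⟨f, bgF_continuous hχ hF⟩ with hfc
  have hcoeff_eq : fourierCoeff (⇑fc) = c := rfl
  have hps : ∀ x : AddCircle (2 * π), HasSum (fun n : ℤ => c n • fourier n x) (f x) := by
    intro x
    have h := has_pointwise_sum_fourier_series_of_summable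
      (f := fc) (by rw [hcoeff_eq]; exact hsummable) x
    rw [hcoeff_eq] at h
    exact h
  -- the Chebyshev partial sum
  set q : Polynomial ℂ := Polynomial.C (c 0) +
      ∑ m ∈ Finset.range k, Polynomial.C (2 * c (m + 1)) * Polynomial.Chebyshev.T ℂ (m + 1)
    with hq
  have hdeg : q.natDegree ≤ k := by
    refine le_trans (Polynomial.natDegree_add_le _ _) ?_
    rw [max_le_iff]
    refine ⟨le_trans (Polynomial.natDegree_C _).le (Nat.zero_le _), ?_⟩
    refine le_trans (Polynomial.natDegree_sum_le _ _) ?_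
    rw [Finset.fold_max_le]
    refine ⟨Nat.zero_le _, ?_⟩
    intro m hm
    rw [Finset.mem_range] at hm
    refine le_trans Polynomial.natDegree_mul_le ?_
    have h2 : ((m : ℤ) + 1) = ((m + 1 : ℕ) : ℤ) := by push_cast; ring
    rw [Polynomial.natDegree_C, h2]
    have := natDegree_T_le (m + 1)
    omega
  refine ⟨q, hdeg, ?_⟩
  intro x hx
  set θ : ℝ := Real.arccos x with hθ
  have hcosθ : Real.cos θ = x := Real.cos_arccos hx.1 hx.2
  have hxcos : (x : ℂ) = Complex.cos (θ : ℂ) := by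
    rw [← hcosθ, Complex.ofReal_cos]
  have hsum := hps ((θ : ℝ) : AddCircle (2 * π))
  have hfθ : f ((θ : ℝ) : AddCircle (2 * π)) = F (x : ℂ) := by
    show F (bgCos _) = _
    rw [bgCos_coe, ← hxcos]
  rw [hfθ] at hsum
  set s : Finset ℤ := Finset.Icc (-(k : ℤ)) k with hs
  -- the partial sum equals q.eval x
  have hqeval : (∑ n ∈ s, c n • fourier n ((θ : ℝ) : AddCircle (2 * π))) = q.eval (x : ℂ) := by
    rw [hs, sum_Icc_int (fun n => c n • fourier n ((θ : ℝ) : AddCircle (2 * π))) k]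
    rw [hq, Polynomial.eval_add, Polynomial.eval_C, Polynomial.eval_finset_sum]
    congr 1
    · rw [smul_eq_mul, fourier_coe_exp]
      simp
    · apply Finset.sum_congr rfl
      intro m _
      rw [Polynomial.eval_mul, Polynomial.eval_C]
      have hT := Polynomial.Chebyshev.T_complex_cos (θ : ℂ) ((m : ℤ) + 1)
      rw [hxcos, hT]
      have heven : c (-((m : ℤ) + 1)) = c ((m : ℤ) + 1) := bgF_coeff_even F ((m : ℤ) + 1)
      have hneg : (-(m + 1) : ℤ) = -((m : ℤ) + 1) := by ring
      rw [smul_eq_mul, smul_eq_mul, fourier_coe_exp, fourier_coe_exp, hneg, heven]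
      rw [Complex.cos]
      push_cast
      ring_nf
  -- remainder has sum
  have hfin : HasSum (fun n : ℤ => if n ∈ s then c n • fourier n ((θ : ℝ) : AddCircle (2 * π)) else 0)
      (q.eval (x : ℂ)) := by
    have h0 : ∀ b ∉ s, (fun n : ℤ => if n ∈ s then c n • fourier n ((θ : ℝ) : AddCircle (2 * π)) else 0) b = 0 := by
      intro b hb
      simp [hb]
    have hh : HasSum (fun n : ℤ => if n ∈ s then c n • fourier n ((θ : ℝ) : AddCircle (2 * π)) else 0)
        (∑ b ∈ s, if b ∈ s then c b • fourier b ((θ : ℝ) : AddCircle (2 * π)) else 0) :=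
      hasSum_sum_of_ne_finset_zero h0
    have hval : (∑ b ∈ s, if b ∈ s then c b • fourier b ((θ : ℝ) : AddCircle (2 * π)) else 0)
        = q.eval (x : ℂ) := by
      rw [← hqeval]
      exact Finset.sum_congr rfl (fun n hn => by simp [hn])
    rwa [hval] at hh
  have hrem := hsum.sub hfin
  have hremfx : (fun n : ℤ => c n • fourier n ((θ : ℝ) : AddCircle (2 * π))
        - if n ∈ s then c n • fourier n ((θ : ℝ) : AddCircle (2 * π)) else 0)
      = fun n : ℤ => if n ∈ s then 0 else c n • fourier n ((θ : ℝ) : AddCircle (2 * π)) := by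
    funext n
    split_ifs <;> ring
  rw [hremfx] at hrem
  -- bound the remainder
  set g : ℤ → ℝ := fun n => if n ∈ s then 0 else Mχ * χ⁻¹ ^ n.natAbs with hg
  have hgnat : (fun m : ℕ => g m) = fun m : ℕ => if m < k + 1 then 0 else Mχ * χ⁻¹ ^ m := by
    funext m
    have : ((m : ℤ) ∈ s) ↔ m < k + 1 := by
      rw [hs, Finset.mem_Icc]
      omega
    simp only [hg, this, Int.natAbs_natCast]
  have hgneg : (fun m : ℕ => g (-(m + 1))) = fun m : ℕ => if m < k then 0 else (Mχ * χ⁻¹) * χ⁻¹ ^ m := by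
    funext m
    have hmem : ((-(m + 1) : ℤ) ∈ s) ↔ m < k := by
      rw [hs, Finset.mem_Icc]
      omega
    have hna : (-(m + 1) : ℤ).natAbs = m + 1 := by omega
    simp only [hg, hmem, hna]
    split_ifs with h
    · rfl
    · rw [pow_succ]
      ring
  have hgs : HasSum g (Mχ * χ⁻¹ ^ (k + 1) / (1 - χ⁻¹) + (Mχ * χ⁻¹) * χ⁻¹ ^ k / (1 - χ⁻¹)) := by
    apply HasSum.of_nat_of_neg_add_one
    · rw [hgnat]
      exact geo_tail hr0 hr1 Mχ (k + 1)
    · rw [hgneg]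
      exact geo_tail hr0 hr1 (Mχ * χ⁻¹) k
  have hbnd : ∀ n : ℤ, ‖if n ∈ s then 0 else c n • fourier n ((θ : ℝ) : AddCircle (2 * π))‖ ≤ g n := by
    intro n
    by_cases h : n ∈ s
    · simp [hg, h]
    · simp only [hg, h, if_false]
      rw [norm_smul]
      have hfn : ‖fourier n ((θ : ℝ) : AddCircle (2 * π))‖ = 1 := by
        rw [fourier_coe_exp]
        have harg : ((n : ℂ) * θ * Complex.I) = ((n * θ : ℝ) : ℂ) * Complex.I := by push_cast; ring
        rw [harg, Complex.norm_exp_ofReal_mul_I]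
      rw [hfn, mul_one]
      exact hbound n
  have hnorm := tsum_of_norm_bounded hgs hbnd
  rw [hrem.tsum_eq] at hnorm
  refine le_trans hnorm ?_
  have h1r : 1 - χ⁻¹ = (χ - 1) / χ := by field_simp
  have hle : Mχ * χ⁻¹ ^ (k + 1) / (1 - χ⁻¹) + (Mχ * χ⁻¹) * χ⁻¹ ^ k / (1 - χ⁻¹)
      = 2 * Mχ * χ⁻¹ ^ k / (χ - 1) := by
    rw [h1r, pow_succ]
    have hχ1 : χ - 1 ≠ 0 := by intro h; nlinarith
    field_simp
    ring
  rw [hle]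

end BenziGolubAux
end BenziGolubAux

set_option maxHeartbeats 1600000

/-- Entrywise exponential decay for analytic functions of a banded self-adjoint
operator with spectrum in `[-1,1]` (Benzi–Golub). -/
theorem benzi_golub_exponential_decay
    (b : ℕ) (hb_pos : 0 < b) (hb_even : Even b)
    (D : lp (fun _ : ℕ => ℂ) 2 →L[ℂ] lp (fun _ : ℕ => ℂ) 2)
    (hD : IsSelfAdjoint D)
    (hband : ∀ i j : ℕ, (b : ℝ) / 2 < |(i : ℝ) - (j : ℝ)| →
      (inner ℂ (lp.single 2 i (1 : ℂ)) (D (lp.single 2 j (1 : ℂ))) : ℂ) = 0)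
    (hspec : spectrum ℂ D ⊆ Complex.ofReal '' Set.Icc (-1 : ℝ) 1)
    (χ : ℝ) (hχ : 1 < χ)
    (F : ℂ → ℂ)
    (hF : AnalyticOnNhd ℂ F (bernsteinEllipse χ))
    (Mχ : ℝ)
    (hMχ : IsGreatest ((fun z => ‖F z‖) '' bernsteinEllipse χ) Mχ) :
    ∀ i j : ℕ,
      ‖(inner ℂ (lp.single 2 i (1 : ℂ)) ((cfc F D) (lp.single 2 j (1 : ℂ))) : ℂ)‖ ≤
        max (2 * χ * Mχ / (χ - 1)) ‖cfc F D‖ *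
          (χ ^ (-(2 / (b : ℝ)))) ^ ((i : ℤ) - (j : ℤ)).natAbs := by
  classical
  intro i j
  have hSA : IsStarNormal D := hD.isStarNormal
  obtain ⟨cb, hcb⟩ := hb_even
  have hcb_pos : 0 < cb := by omega
  obtain ⟨⟨z0, hz0mem, hz0M⟩, hub⟩ := hMχ
  have hM0 : 0 ≤ Mχ := by rw [← hz0M]; exact norm_nonneg _
  have hMbound : ∀ z ∈ bernsteinEllipse χ, ‖F z‖ ≤ Mχ := fun z hz => hub ⟨z, hz, rfl⟩
  have hχ0 : (0 : ℝ) < χ := by linarith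
  have hχ1 : (0 : ℝ) < χ - 1 := by linarith
  have hFcont : ContinuousOn F (spectrum ℂ D) := by
    intro z hz
    obtain ⟨xr, hxr, rfl⟩ := hspec hz
    exact (hF _ (BenziGolubAux.real_mem_ellipse hχ hxr)).continuousAt.continuousWithinAt
  have hband' : ∀ i' j' : ℕ, (cb : ℝ) < |(i' : ℝ) - (j' : ℝ)| →
      (inner ℂ (BenziGolubAux.ee i') (D (BenziGolubAux.ee j')) : ℂ) = 0 := by
    intro i' j' hlt
    apply hband
    have hhalf : (b : ℝ) / 2 = cb := by rw [hcb]; push_cast; ring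
    rw [hhalf]
    exact hlt
  set n : ℕ := ((i : ℤ) - (j : ℤ)).natAbs with hn
  have habs : |(i : ℝ) - (j : ℝ)| = (n : ℝ) := by
    have hcast : ((i : ℝ) - (j : ℝ)) = (((i : ℤ) - (j : ℤ) : ℤ) : ℝ) := by push_cast; ring
    rw [hcast, ← Int.cast_abs, Int.abs_eq_natAbs, hn, Int.cast_natCast]
  have hρ0 : (0 : ℝ) ≤ χ ^ (-(2 / (b : ℝ))) := Real.rpow_nonneg hχ0.le _
  show ‖(inner ℂ (BenziGolubAux.ee i) ((cfc F D) (BenziGolubAux.ee j)) : ℂ)‖ ≤ _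
  rcases Nat.eq_zero_or_pos n with hn0 | hnpos
  · rw [hn0]
    simp only [pow_zero, mul_one]
    exact le_trans (BenziGolubAux.entry_norm_le (cfc F D) i j) (le_max_right _ _)
  · set k : ℕ := (n - 1) / cb with hk
    obtain ⟨q, hqdeg, hqbound⟩ := BenziGolubAux.cheb_approx hχ hF hMbound hM0 k
    have hP : cfc (fun z => q.eval z) D = Polynomial.aeval D q := by
      have h := cfc_map_polynomial (R := ℂ) q id D
      simpa [cfc_id ℂ D] using h
    have hqcont : ContinuousOn (fun z : ℂ => q.eval z) (spectrum ℂ D) :=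
      (Polynomial.continuous_aeval q).continuousOn
    have hsub : cfc F D - Polynomial.aeval D q = cfc (fun z => F z - q.eval z) D := by
      rw [cfc_sub F (fun z => q.eval z) D hFcont hqcont, hP]
    have hnormsub : ‖cfc F D - Polynomial.aeval D q‖ ≤ 2 * Mχ * χ⁻¹ ^ k / (χ - 1) := by
      rw [hsub]
      apply norm_cfc_le (div_nonneg (by positivity) hχ1.le)
      intro zz hzz
      obtain ⟨xr, hxr, rfl⟩ := hspec hzz
      exact hqbound xr hxr
    have hkcb : ((k * cb : ℕ) : ℝ) < |(i : ℝ) - (j : ℝ)| := by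
      rw [habs]
      have h1 : k * cb ≤ n - 1 := by rw [hk]; exact Nat.div_mul_le_self _ _
      have h2 : k * cb < n := lt_of_le_of_lt h1 (Nat.sub_lt hnpos zero_lt_one)
      exact_mod_cast h2
    have hPzero := BenziGolubAux.banded_aeval D cb hband' q k (Nat.lt_succ_of_le hqdeg) i j hkcb
    have hentry : (inner ℂ (BenziGolubAux.ee i) ((cfc F D) (BenziGolubAux.ee j)) : ℂ)
        = inner ℂ (BenziGolubAux.ee i) ((cfc F D - Polynomial.aeval D q) (BenziGolubAux.ee j)) := by
      rw [ContinuousLinearMap.sub_apply, inner_sub_right, hPzero, sub_zero]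
    rw [hentry]
    have hkey : χ⁻¹ ^ k ≤ χ * (χ ^ (-(2 / (b : ℝ)))) ^ n := by
      have hb2 : (b : ℝ) = 2 * cb := by rw [hcb]; push_cast; ring
      have hnat : n ≤ (k + 1) * cb := by
        rw [hk]
        have hdm := Nat.div_add_mod (n - 1) cb
        have hmod := Nat.mod_lt (n - 1) hcb_pos
        set d := (n - 1) / cb with hd
        set m := (n - 1) % cb with hm
        have h4 : cb * d + m + 1 = n := by rw [hdm]; exact Nat.succ_pred_eq_of_pos hnpos
        rw [← h4, show (d + 1) * cb = cb * d + cb by ring, add_assoc]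
        exact Nat.add_le_add_left hmod _
      have hcbR : (0 : ℝ) < (cb : ℝ) := by exact_mod_cast hcb_pos
      have hexp : -(k : ℝ) ≤ 1 + -(2 / (b : ℝ)) * n := by
        rw [hb2]
        have heq : -(2 / (2 * (cb : ℝ))) * n = -((n : ℝ) / cb) := by
          rw [neg_mul, neg_inj]
          field_simp
        rw [heq]
        have hnR : (n : ℝ) ≤ ((k : ℝ) + 1) * cb := by exact_mod_cast hnat
        have hdiv : (n : ℝ) / cb ≤ (k : ℝ) + 1 := by
          rw [div_le_iff₀ hcbR]; linarith
        linarith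
      calc χ⁻¹ ^ k = χ ^ (-(k : ℝ)) := by
            rw [Real.rpow_neg hχ0.le, Real.rpow_natCast, inv_pow]
        _ ≤ χ ^ (1 + -(2 / (b : ℝ)) * n) := (Real.rpow_le_rpow_left_iff hχ).mpr hexp
        _ = χ * (χ ^ (-(2 / (b : ℝ)))) ^ n := by
            rw [Real.rpow_add hχ0, Real.rpow_one, Real.rpow_mul hχ0.le,
              Real.rpow_natCast]
    calc ‖(inner ℂ (BenziGolubAux.ee i) ((cfc F D - Polynomial.aeval D q) (BenziGolubAux.ee j)) : ℂ)‖
        ≤ ‖cfc F D - Polynomial.aeval D q‖ := BenziGolubAux.entry_norm_le _ i j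
      _ ≤ 2 * Mχ * χ⁻¹ ^ k / (χ - 1) := hnormsub
      _ ≤ 2 * χ * Mχ / (χ - 1) * (χ ^ (-(2 / (b : ℝ)))) ^ n := by
          rw [show 2 * Mχ * χ⁻¹ ^ k / (χ - 1) = 2 * Mχ / (χ - 1) * χ⁻¹ ^ k by ring]
          refine le_trans (mul_le_mul_of_nonneg_left hkey
            (div_nonneg (by positivity) hχ1.le)) ?_
          rw [show 2 * Mχ / (χ - 1) * (χ * (χ ^ (-(2 / (b : ℝ)))) ^ n)
            = 2 * χ * Mχ / (χ - 1) * (χ ^ (-(2 / (b : ℝ)))) ^ n by ring]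
      _ ≤ max (2 * χ * Mχ / (χ - 1)) ‖cfc F D‖ * (χ ^ (-(2 / (b : ℝ)))) ^ n :=
          mul_le_mul_of_nonneg_right (le_max_left _ _) (pow_nonneg hρ0 n)
end
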